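/- Every element A of the special unitary group SU(2) (2×2 complex unitary matrices of determinant 1) can be written in cylindrical coordinates: there exist φ ∈ [0, π], θ ∈ [0, 2π) and z ∈ (−2π, 2π] such that A = exp(φ•(cos θ • X + sin θ • Y)) · exp(z•Z). -/

import Mathlib

open scoped Matrix

/-- Halved Pauli matrix `X` generating `su(2)`. -/
noncomputable def X : Matrix (Fin 2) (Fin 2) ℂ := (1 / 2 : ℂ) • !![0, 1; -1, 0]

/-- Halved Pauli matrix `Y` generating `su(2)`. -/
noncomputable def Y : Matrix (Fin 2) (Fin 2) ℂ :=
  (1 / 2 : ℂ) • !![0, Complex.I; Complex.I, 0]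

/-- Halved Pauli matrix `Z` generating `su(2)`. -/
noncomputable def Z : Matrix (Fin 2) (Fin 2) ℂ :=
  (1 / 2 : ℂ) • !![Complex.I, 0; 0, -Complex.I]

open Complex

lemma exp_zZ (z : ℝ) : NormedSpace.exp (z • Z) =
    !![Complex.exp (((z/2 : ℝ) : ℂ) * I), 0; 0, Complex.exp (-(((z/2 : ℝ) : ℂ) * I))] := by
  have h : z • Z = Matrix.diagonal ![((z/2 : ℝ) : ℂ) * I, -(((z/2 : ℝ) : ℂ) * I)] := by
    ext i j
    fin_cases i <;> fin_cases j <;>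
      simp [Z, Matrix.diagonal] <;> push_cast <;> ring
  rw [h, Matrix.exp_diagonal]
  ext i j
  fin_cases i <;> fin_cases j <;>
    simp [Matrix.diagonal, Complex.exp_eq_exp_ℂ, Function.comp]

lemma exp_XY (r θ : ℝ) : NormedSpace.exp ((2*r : ℝ) • (Real.cos θ • X + Real.sin θ • Y)) =
    !![(Real.cos r : ℂ), Real.sin r * Complex.exp (θ * I);
       -Real.sin r * Complex.exp (-(θ * I)), Real.cos r] := by
  set P : Matrix (Fin 2) (Fin 2) ℂ := !![Complex.exp (θ*I), Complex.exp (θ*I); I, -I] with hPdef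
  have hdet : P.det = -2 * I * Complex.exp (θ*I) := by
    simp [hPdef, Matrix.det_fin_two_of]; ring
  have hP : IsUnit P.det := by
    rw [hdet]
    exact (isUnit_iff_ne_zero.2 (by
      simp [Complex.exp_ne_zero, Complex.I_ne_zero]))
  haveI := P.invertibleOfIsUnitDet hP
  set D : Matrix (Fin 2) (Fin 2) ℂ := Matrix.diagonal ![(r:ℂ) * I, -((r:ℂ) * I)] with hDdef
  have hE : Complex.exp (I * (θ:ℂ)) = Complex.cos θ + Complex.sin θ * I := by
    rw [mul_comm, Complex.exp_mul_I]
  have hE' : Complex.exp ((θ:ℂ) * I) = Complex.cos θ + Complex.sin θ * I := by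
    rw [Complex.exp_mul_I]
  have hpyth : Complex.sin (θ:ℂ) ^ 2 + Complex.cos (θ:ℂ) ^ 2 = 1 := Complex.sin_sq_add_cos_sq _
  have key : ((2*r : ℝ) • (Real.cos θ • X + Real.sin θ • Y)) * P = P * D := by
    ext i j
    fin_cases i <;> fin_cases j <;>
      · simp [hPdef, hDdef, X, Y, Matrix.mul_apply, Fin.sum_univ_two, Matrix.diagonal]
        simp only [hE, hE']
        first
        | ring1
        | linear_combination (-(r:ℂ)) * hpyth + ((r:ℂ) * Complex.sin θ ^ 2 - r) * Complex.I_sq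
  have hM : ((2*r : ℝ) • (Real.cos θ • X + Real.sin θ • Y)) = P * D * P⁻¹ :=
    ((Matrix.mul_inv_eq_iff_eq_mul_of_invertible P (P * D) _).mpr key.symm).symm
  rw [hM, Matrix.exp_conj P D (P.isUnit_iff_isUnit_det.mpr hP), Matrix.exp_diagonal]
  have goal2 : P * Matrix.diagonal (NormedSpace.exp ![(r:ℂ) * I, -((r:ℂ) * I)]) * P⁻¹ =
      !![(Real.cos r : ℂ), Real.sin r * Complex.exp (θ * I);
       -Real.sin r * Complex.exp (-(θ * I)), Real.cos r] := by
    rw [Matrix.mul_inv_eq_iff_eq_mul_of_invertible]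
    have e1 : NormedSpace.exp ((r:ℂ) * I) = Complex.cos r + Complex.sin r * I := by
      rw [← Complex.exp_eq_exp_ℂ, Complex.exp_mul_I]
    have e2 : NormedSpace.exp (-((r:ℂ) * I)) = Complex.cos r - Complex.sin r * I := by
      rw [← Complex.exp_eq_exp_ℂ, ← neg_mul, Complex.exp_mul_I, Complex.cos_neg, Complex.sin_neg]
      ring
    have he : Complex.exp (-((θ:ℂ)*I)) * Complex.exp ((θ:ℂ)*I) = 1 := by
      rw [← Complex.exp_add]; simp
    have he2 : Complex.exp (-(I*(θ:ℂ))) * Complex.exp (I*(θ:ℂ)) = 1 := by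
      rw [← Complex.exp_add]; simp
    ext i j
    fin_cases i <;> fin_cases j <;>
      · simp [hPdef, Matrix.mul_apply, Fin.sum_univ_two, Matrix.diagonal, e1, e2]
        first
        | ring1
        | linear_combination Complex.sin (r:ℂ) * he2 + Complex.sin (r:ℂ) * Complex.I_sq
        | linear_combination (-Complex.sin (r:ℂ)) * he2 - Complex.sin (r:ℂ) * Complex.I_sq
        | linear_combination Complex.sin (r:ℂ) * he + Complex.sin (r:ℂ) * Complex.I_sq
        | linear_combination (-Complex.sin (r:ℂ)) * he - Complex.sin (r:ℂ) * Complex.I_sq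
        | linear_combination Complex.cos (r:ℂ) * he2
        | linear_combination Complex.cos (r:ℂ) * he
  exact goal2

theorem su2_cylindrical_coordinates (A : Matrix.specialUnitaryGroup (Fin 2) ℂ) :
    ∃ φ ∈ Set.Icc (0 : ℝ) Real.pi, ∃ θ ∈ Set.Ico (0 : ℝ) (2 * Real.pi),
      ∃ z ∈ Set.Ioc (-(2 * Real.pi)) (2 * Real.pi),
        (A : Matrix (Fin 2) (Fin 2) ℂ) =
          NormedSpace.exp (φ • (Real.cos θ • X + Real.sin θ • Y)) *
            NormedSpace.exp (z • Z) := by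
  obtain ⟨hU, hdet⟩ := Matrix.mem_specialUnitaryGroup_iff.mp A.2
  set A' : Matrix (Fin 2) (Fin 2) ℂ := (A : Matrix (Fin 2) (Fin 2) ℂ) with hA'
  -- structure of A'
  have h1 : A' * star A' = 1 := (Matrix.mem_unitaryGroup_iff.mp hU)
  have hinv : A'⁻¹ = star A' := Matrix.inv_eq_right_inv h1
  have hadj : A'⁻¹ = A'.adjugate := by
    rw [Matrix.inv_def, hdet]; simp
  have hstar : star A' = !![A' 1 1, -A' 0 1; -A' 1 0, A' 0 0] := by
    rw [← hinv, hadj, Matrix.adjugate_fin_two]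
  set a : ℂ := A' 0 0 with ha
  set b : ℂ := A' 0 1 with hb
  have hd : A' 1 1 = (starRingEnd ℂ) a := by
    have := congrFun (congrFun hstar 0) 0
    simp [Matrix.conjTranspose_apply] at this
    exact this.symm
  have hc : A' 1 0 = -(starRingEnd ℂ) b := by
    have := congrFun (congrFun hstar 0) 1
    simp [Matrix.conjTranspose_apply] at this
    have h2 := congrArg (starRingEnd ℂ) this
    simpa using h2
  have hdet2 : A' 0 0 * A' 1 1 - A' 0 1 * A' 1 0 = 1 := by
    rw [← Matrix.det_fin_two, hdet]
  have hnorm : ‖a‖^2 + ‖b‖^2 = 1 := by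
    have h3 : a * (starRingEnd ℂ) a + b * (starRingEnd ℂ) b = 1 := by
      rw [hd, hc] at hdet2; linear_combination hdet2
    rw [Complex.mul_conj, Complex.mul_conj] at h3
    have := congrArg Complex.re h3
    simpa [Complex.sq_norm, Complex.normSq_apply] using this
  have hπ : (0:ℝ) < Real.pi := Real.pi_pos
  -- the coordinates
  set na : ℝ := ‖a‖ with hna
  set nb : ℝ := ‖b‖ with hnb
  have hna0 : 0 ≤ na := norm_nonneg a
  have hnb0 : 0 ≤ nb := norm_nonneg b
  have hna1 : na ≤ 1 := by nlinarith
  set r : ℝ := Real.arccos na with hr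
  have hcos : Real.cos r = na := Real.cos_arccos (by linarith) hna1
  have hsin : Real.sin r = nb := by
    rw [hr, Real.sin_arccos]
    have : 1 - na^2 = nb^2 := by linarith
    rw [this, Real.sqrt_sq hnb0]
  set z : ℝ := 2 * a.arg with hz
  set s : ℝ := b.arg + a.arg with hs
  set θ : ℝ := if 2*Real.pi ≤ s then s - 2*Real.pi else if s < 0 then s + 2*Real.pi else s with hθ
  have harg_a1 := Complex.neg_pi_lt_arg a
  have harg_a2 := Complex.arg_le_pi a
  have harg_b1 := Complex.neg_pi_lt_arg b
  have harg_b2 := Complex.arg_le_pi b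
  have hθmem : θ ∈ Set.Ico (0:ℝ) (2*Real.pi) := by
    rw [hθ]
    split_ifs with h4 h5
    · constructor <;> simp [hs] at h4 ⊢ <;> nlinarith
    · constructor <;> nlinarith
    · push_neg at h4 h5
      exact ⟨h5, lt_of_le_of_ne h4.le (by intro hh; nlinarith)⟩
  have hθexp : Complex.exp ((θ:ℂ) * I) = Complex.exp ((s:ℂ) * I) := by
    rw [hθ]
    split_ifs
    · push_cast
      rw [sub_mul, Complex.exp_sub]
      rw [show ((2:ℂ) * Real.pi * I) = 2 * Real.pi * I by push_cast; ring,
        Complex.exp_two_pi_mul_I, div_one]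
    · push_cast
      rw [add_mul, Complex.exp_add]
      rw [show ((2:ℂ) * Real.pi * I) = 2 * Real.pi * I by push_cast; ring,
        Complex.exp_two_pi_mul_I, mul_one]
    · rfl
  have hθexp' : Complex.exp (-((θ:ℂ) * I)) = Complex.exp (-((s:ℂ) * I)) := by
    rw [Complex.exp_neg, Complex.exp_neg, hθexp]
  refine ⟨2*r, ⟨by have := Real.arccos_nonneg na; rw [hr]; linarith, ?_⟩, θ, hθmem, z, ⟨?_, ?_⟩, ?_⟩
  · have : r ≤ Real.pi/2 := Real.arccos_le_pi_div_two.mpr hna0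
    linarith
  · rw [hz]; nlinarith
  · rw [hz]; nlinarith
  · rw [exp_XY r θ, exp_zZ z, hcos, hsin]
    have hz2 : (z/2 : ℝ) = a.arg := by rw [hz]; ring
    rw [hz2]
    have hA : a = (na:ℂ) * Complex.exp ((a.arg : ℂ) * I) := (Complex.norm_mul_exp_arg_mul_I a).symm
    have hB : b = (nb:ℂ) * Complex.exp ((b.arg : ℂ) * I) := (Complex.norm_mul_exp_arg_mul_I b).symm
    have hconj : ∀ c : ℂ, (starRingEnd ℂ) c =
        (‖c‖ : ℂ) * Complex.exp (-((c.arg:ℂ) * I)) := by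
      intro c
      conv_lhs => rw [← Complex.norm_mul_exp_arg_mul_I c]
      rw [map_mul, ← Complex.exp_conj, map_mul, Complex.conj_ofReal, Complex.conj_ofReal,
        Complex.conj_I, mul_neg, ← neg_mul]
    ext i j
    fin_cases i <;> fin_cases j
    · -- entry (0,0) : a = na * exp(arg a * I)
      simp [Matrix.mul_apply, Fin.sum_univ_two]
      exact hA
    · -- entry (0,1) : b = nb * exp(θ I) * exp(-(arg a) I)
      simp [Matrix.mul_apply, Fin.sum_univ_two]
      rw [hθexp, mul_assoc, ← Complex.exp_add]
      rw [show ((s:ℂ) * I + -((a.arg:ℂ) * I)) = (b.arg : ℂ) * I by rw [hs]; push_cast; ring]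
      exact hB
    · -- entry (1,0) : -conj b = -nb * exp(-θ I) * exp(arg a * I)
      simp [Matrix.mul_apply, Fin.sum_univ_two, hc]
      rw [hθexp', mul_assoc, ← Complex.exp_add]
      rw [show (-((s:ℂ) * I) + (a.arg:ℂ) * I) = -((b.arg : ℂ) * I) by rw [hs]; push_cast; ring]
      exact hconj b
    · -- entry (1,1) : conj a = na * exp(-(arg a) I)
      simp [Matrix.mul_apply, Fin.sum_univ_two, hd]
      exact hconj a
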